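/- Let G be a graph with lists L satisfying v ∈ L(v) and property (P1) (x ∈ L(y) implies L(x) ⊆ L(y)). Construct G' by: removing all vertices z that lie in L(x) ∩ L(y) for some edge {x,y} of G, and adding all edges between L(x) and L(y) (restricted to remaining vertices) for every edge {x,y} of G with x, y remaining. Then for any two remaining vertices x, y with L(x) ⊆ L(y), the neighborhood of y in G' is contained in the neighborhood of x in G'. -/
import Mathlib


/-- The surviving vertices of the auxiliary graph `G'`: vertices not lying in a list
intersection `L(x) ∩ L(y)` over an edge `{x,y}` of `G`. -/
def survive {V : Type*} (G : SimpleGraph V) (L : V → Set V) : Set V :=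
  {v | ¬ ∃ x y, G.Adj x y ∧ v ∈ L x ∧ v ∈ L y}

/-- Adjacency of the auxiliary graph `G'`: for every edge `{x,y}` of `G` with both
endpoints surviving, all (surviving) pairs between `L(x)` and `L(y)` are edges. -/
def auxAdj {V : Type*} (G : SimpleGraph V) (L : V → Set V) (a b : V) : Prop :=
  a ∈ survive G L ∧ b ∈ survive G L ∧
    ∃ x y, G.Adj x y ∧ x ∈ survive G L ∧ y ∈ survive G L ∧
      ((a ∈ L x ∧ b ∈ L y) ∨ (a ∈ L y ∧ b ∈ L x))

/-- for surviving vertices `x, y` with `L(x) ⊆ L(y)`, the `G'`-neighborhood of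
`y` is contained in the `G'`-neighborhood of `x`. -/
theorem stmt8 {V : Type*} (G : SimpleGraph V) (L : V → Set V)
    (hself : ∀ v, v ∈ L v)
    (hP1 : ∀ x y, x ∈ L y → L x ⊆ L y)
    (x y : V) (hx : x ∈ survive G L) (hy : y ∈ survive G L)
    (hxy : L x ⊆ L y) :
    ∀ z, auxAdj G L y z → auxAdj G L x z := by
  rintro z ⟨-, hz, u, v, huv, hu, hv, ⟨hyu, hzv⟩ | ⟨hyv, hzu⟩⟩
  · exact ⟨hx, hz, u, v, huv, hu, hv, Or.inl ⟨hP1 y u hyu (hxy (hself x)), hzv⟩⟩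
  · exact ⟨hx, hz, u, v, huv, hu, hv, Or.inr ⟨hP1 y v hyv (hxy (hself x)), hzu⟩⟩
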